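/- Suppose the Baron–Myerson-with-quantity-floor schedule q* violates some robustness constraint, i.e., W̲(θ, q*) < G* for some θ ∈ Θ (equivalently, q* does not solve (ROPT)). Then θ^m < θ̄ and θ^m < θ*. -/
import Mathlib


open MeasureTheory Set

noncomputable section

/-- The base environment: type space `Θ = [θl, θu]`, capacity `qbar`, lowest inverse
demand `Pl = P̲` (decreasing and continuous on `[0, qbar]` with `Pl 0 > θu`) and the
induced lowest demand `Dl = D̲`, with `Dl θl < qbar`. -/
structure Env where
  θl : ℝ
  θu : ℝ
  qbar : ℝ
  Pl : ℝ → ℝ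
  Dl : ℝ → ℝ
  θl_pos : 0 < θl
  θlu : θl < θu
  qbar_pos : 0 < qbar
  Pl_anti : StrictAntiOn Pl (Icc 0 qbar)
  Pl_cont : ContinuousOn Pl (Icc 0 qbar)
  Pl0 : θu < Pl 0
  Dl_inv : ∀ p, Pl qbar ≤ p → p ≤ Pl 0 → Dl p ∈ Icc (0:ℝ) qbar ∧ Pl (Dl p) = p
  Dl_high : ∀ p, Pl 0 < p → Dl p = 0
  Dl_low : ∀ p, p < Pl qbar → Dl p = qbar
  Dl_lt : Dl θl < qbar

namespace Env

/-- The type space `Θ = [θl, θu]`. -/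
def Θ (E : Env) : Set ℝ := Icc E.θl E.θu

/-- The lowest gross value function `V̲ (x) = ∫_0^x P̲`. -/
def Vl (E : Env) (x : ℝ) : ℝ := ∫ s in (0:ℝ)..x, E.Pl s

/-- `q_ℓ = D̲(θu)`: the efficient quantity at the lowest demand and highest cost. -/
def ql (E : Env) : ℝ := E.Dl E.θu

/-- `G* = V̲(q_ℓ) − θu · q_ℓ`: the maximal attainable guarantee. -/
def Gstar (E : Env) : ℝ := E.Vl E.ql - E.θu * E.ql

/-- A feasible quantity schedule: weakly decreasing on `Θ`, valued in `[0, qbar]`. -/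
def IsSchedule (E : Env) (q : ℝ → ℝ) : Prop :=
  AntitoneOn q E.Θ ∧ ∀ θ ∈ E.Θ, q θ ∈ Icc (0:ℝ) E.qbar

/-- `W̲(θ, q) = V̲(q(θ)) − θ q(θ) − ∫_θ^{θu} q`: ex-post welfare at the lowest demand
with zero rent for the highest type. -/
def Wl (E : Env) (q : ℝ → ℝ) (θ : ℝ) : ℝ :=
  E.Vl (q θ) - θ * q θ - ∫ y in θ..E.θu, q y

/-- An IC and IR (direct) quantity mechanism `(q, u)`. -/
def IsMech (E : Env) (q u : ℝ → ℝ) : Prop :=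
  E.IsSchedule q ∧ 0 ≤ u E.θu ∧
    ∀ θ ∈ E.Θ, u θ = u E.θu + ∫ y in θ..E.θu, q y

/-- The set `𝒱` of admissible gross value functions: integrals of decreasing continuous
inverse demands dominating `P̲` pointwise. -/
def IsValue (E : Env) (V : ℝ → ℝ) : Prop :=
  ∃ P : ℝ → ℝ, StrictAntiOn P (Icc 0 E.qbar) ∧ ContinuousOn P (Icc 0 E.qbar) ∧
    (∀ s ∈ Icc (0:ℝ) E.qbar, E.Pl s ≤ P s) ∧ ∀ x, V x = ∫ s in (0:ℝ)..x, P s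

/-- A Borel probability measure supported in `Θ` (the measure of a cdf `F ∈ 𝒻`). -/
def IsTech (E : Env) (μ : Measure ℝ) : Prop :=
  IsProbabilityMeasure μ ∧ μ (E.Θᶜ) = 0

/-- Ex-ante welfare `W(M; V, F)` of the mechanism `(q, u)` under value `V` and
cost technology `μ`. -/
def W (E : Env) (q u V : ℝ → ℝ) (μ : Measure ℝ) : ℝ :=
  ∫ θ, (V (q θ) - θ * q θ - u θ) ∂μ

/-- The welfare guarantee `G(M) = inf_{V ∈ 𝒱, F ∈ 𝒻} W(M; V, F)`. -/
def G (E : Env) (q u : ℝ → ℝ) : ℝ :=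
  sInf {w : ℝ | ∃ (V : ℝ → ℝ) (μ : Measure ℝ),
    E.IsValue V ∧ E.IsTech μ ∧ w = E.W q u V μ}

/-- The short list: IC and IR mechanisms with the highest guarantee. -/
def ShortList (E : Env) (q u : ℝ → ℝ) : Prop :=
  E.IsMech q u ∧ ∀ q' u' : ℝ → ℝ, E.IsMech q' u' → E.G q' u' ≤ E.G q u

/-- Feasibility in the program (ROPT): a schedule satisfying all robustness
constraints `W̲(θ, q) ≥ G*`. -/
def FeasibleROPT (E : Env) (q : ℝ → ℝ) : Prop :=
  E.IsSchedule q ∧ ∀ θ ∈ E.Θ, E.Gstar ≤ E.Wl q θ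

end Env

/-- A demand `D ∈ 𝒟`, bundled with the inverse demand `P` that induces it:
`P` decreasing and continuous on `[0, qbar]`, `P ≥ P̲` pointwise, `P 0 > θu`. -/
structure Demand (E : Env) where
  P : ℝ → ℝ
  D : ℝ → ℝ
  P_anti : StrictAntiOn P (Icc 0 E.qbar)
  P_cont : ContinuousOn P (Icc 0 E.qbar)
  P_ge : ∀ s ∈ Icc (0:ℝ) E.qbar, E.Pl s ≤ P s
  P0 : E.θu < P 0
  D_inv : ∀ p, P E.qbar ≤ p → p ≤ P 0 → D p ∈ Icc (0:ℝ) E.qbar ∧ P (D p) = p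
  D_high : ∀ p, P 0 < p → D p = 0
  D_low : ∀ p, p < P E.qbar → D p = E.qbar
  D_lt : D E.θl < E.qbar

namespace Demand

/-- The gross value function `V_D(x) = ∫_0^x P` induced by a demand `D ∈ 𝒟`. -/
def V {E : Env} (D : Demand E) (x : ℝ) : ℝ := ∫ s in (0:ℝ)..x, D.P s

end Demand

namespace Env

/-- The lowest demand `D̲` as an element of `𝒟`. -/
def DlDemand (E : Env) : Demand E where
  P := E.Pl
  D := E.Dl
  P_anti := E.Pl_anti
  P_cont := E.Pl_cont
  P_ge := fun _ _ => le_refl _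
  P0 := E.Pl0
  D_inv := E.Dl_inv
  D_high := E.Dl_high
  D_low := E.Dl_low
  D_lt := E.Dl_lt

/-- A price regulation `(p, t)`: nonnegative prices and transfers. -/
def IsPriceReg (E : Env) (p : ℝ → ℝ) (t : ℝ → Demand E → ℝ) : Prop :=
  (∀ θ ∈ E.Θ, 0 ≤ p θ) ∧ ∀ θ ∈ E.Θ, ∀ D : Demand E, 0 ≤ t θ D

/-- The rent `ũ(θ, D) = t(θ, D) − θ · D(p(θ))` of the monopolist. -/
def rent (E : Env) (p : ℝ → ℝ) (t : ℝ → Demand E → ℝ) (θ : ℝ) (D : Demand E) : ℝ :=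
  t θ D - θ * D.D (p θ)

/-- Ex-post incentive compatibility of a price regulation. -/
def EPIC (E : Env) (p : ℝ → ℝ) (t : ℝ → Demand E → ℝ) : Prop :=
  ∀ θ ∈ E.Θ, ∀ θ' ∈ E.Θ, ∀ D : Demand E,
    t θ' D - θ * D.D (p θ') ≤ E.rent p t θ D

/-- Ex-post individual rationality of a price regulation. -/
def EPIR (E : Env) (p : ℝ → ℝ) (t : ℝ → Demand E → ℝ) : Prop :=
  ∀ θ ∈ E.Θ, ∀ D : Demand E, 0 ≤ E.rent p t θ D

/-- Ex-post welfare `w̃(θ; D) = V_D(D(p(θ))) − θ·D(p(θ)) − ũ(θ, D)`. -/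
def wt (E : Env) (p : ℝ → ℝ) (t : ℝ → Demand E → ℝ) (θ : ℝ) (D : Demand E) : ℝ :=
  D.V (D.D (p θ)) - θ * D.D (p θ) - E.rent p t θ D

/-- Ex-ante welfare `W̃((p,t); D, F)` of a price regulation. -/
def Wt (E : Env) (p : ℝ → ℝ) (t : ℝ → Demand E → ℝ) (D : Demand E) (μ : Measure ℝ) : ℝ :=
  ∫ θ, E.wt p t θ D ∂μ

/-- The welfare guarantee `G̃((p,t)) = inf_{D ∈ 𝒟, F ∈ 𝒻} W̃((p,t); D, F)`. -/
def Gt (E : Env) (p : ℝ → ℝ) (t : ℝ → Demand E → ℝ) : ℝ :=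
  sInf {w : ℝ | ∃ (D : Demand E) (μ : Measure ℝ), E.IsTech μ ∧ w = E.Wt p t D μ}

/-- An EPIC and EPIR price regulation. -/
def IsAdmissiblePR (E : Env) (p : ℝ → ℝ) (t : ℝ → Demand E → ℝ) : Prop :=
  E.IsPriceReg p t ∧ E.EPIC p t ∧ E.EPIR p t

/-- The price short list: EPIC and EPIR price regulations with the highest guarantee. -/
def PriceShortList (E : Env) (p : ℝ → ℝ) (t : ℝ → Demand E → ℝ) : Prop :=
  E.IsAdmissiblePR p t ∧
    ∀ (p' : ℝ → ℝ) (t' : ℝ → Demand E → ℝ), E.IsAdmissiblePR p' t' → E.Gt p' t' ≤ E.Gt p t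

end Env

/-- The conjectured model: a regular cdf `F*` with density `f*` on `Θ`, and a
conjectured inverse demand `P*` (with induced demand `D*`) dominating `P̲`. -/
structure Model (E : Env) where
  Fstar : ℝ → ℝ
  fstar : ℝ → ℝ
  Pstar : ℝ → ℝ
  Dstar : ℝ → ℝ
  fstar_pos : ∀ θ ∈ E.Θ, 0 < fstar θ
  Fstar_ac : ∀ θ ∈ E.Θ, Fstar θ = ∫ y in E.θl..θ, fstar y
  Fstar_l : Fstar E.θl = 0
  Fstar_u : Fstar E.θu = 1
  zstar_cont : ContinuousOn (fun θ => θ + Fstar θ / fstar θ) E.Θ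
  zstar_mono : StrictMonoOn (fun θ => θ + Fstar θ / fstar θ) E.Θ
  Pstar_anti : StrictAntiOn Pstar (Icc 0 E.qbar)
  Pstar_cont : ContinuousOn Pstar (Icc 0 E.qbar)
  Pstar_ge : ∀ s ∈ Icc (0:ℝ) E.qbar, E.Pl s ≤ Pstar s
  Pstar0 : E.θu < Pstar 0
  Dstar_inv : ∀ p, Pstar E.qbar ≤ p → p ≤ Pstar 0 →
    Dstar p ∈ Icc (0:ℝ) E.qbar ∧ Pstar (Dstar p) = p
  Dstar_high : ∀ p, Pstar 0 < p → Dstar p = 0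
  Dstar_low : ∀ p, p < Pstar E.qbar → Dstar p = E.qbar
  Dstar_lt : Dstar E.θl < E.qbar

namespace Model

variable {E : Env} (Mo : Model E)

/-- The virtual cost `z*(θ) = θ + F*(θ)/f*(θ)`. -/
def zstar (θ : ℝ) : ℝ := θ + Mo.Fstar θ / Mo.fstar θ

/-- The conjectured gross value function `V*(x) = ∫_0^x P*`. -/
def Vstar (x : ℝ) : ℝ := ∫ s in (0:ℝ)..x, Mo.Pstar s

/-- The Baron–Myerson schedule `q^BM(θ) = D*(z*(θ))`. -/
def qBM (θ : ℝ) : ℝ := Mo.Dstar (Mo.zstar θ)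

/-- The Baron–Myerson-with-quantity-floor schedule `q*(θ) = max{q^BM(θ), q_ℓ}`. -/
def qstar (θ : ℝ) : ℝ := max (Mo.qBM θ) E.ql

/-- The objective of (ROPT): expected virtual surplus under the conjectured model. -/
def J (q : ℝ → ℝ) : ℝ :=
  ∫ θ in E.θl..E.θu, (Mo.Vstar (q θ) - Mo.zstar θ * q θ) * Mo.fstar θ

/-- `q` solves the program (ROPT). -/
def SolvesROPT (q : ℝ → ℝ) : Prop :=
  E.FeasibleROPT q ∧ ∀ q' : ℝ → ℝ, E.FeasibleROPT q' → Mo.J q' ≤ Mo.J q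

/-- `θ*`: the unique solution of `q^BM(θ*) = q_ℓ` in `Θ` when `q^BM(θu) < q_ℓ`;
otherwise `θ* = θu`. -/
def IsThetaStar (θs : ℝ) : Prop :=
  (Mo.qBM E.θu < E.ql ∧ θs ∈ E.Θ ∧ Mo.qBM θs = E.ql) ∨
    (E.ql ≤ Mo.qBM E.θu ∧ θs = E.θu)

/-- `θ^m`: the largest minimizer of `W̲(·, q*)` over `Θ`. -/
def IsThetaM (θm : ℝ) : Prop :=
  θm ∈ E.Θ ∧ (∀ θ' ∈ E.Θ, E.Wl Mo.qstar θm ≤ E.Wl Mo.qstar θ') ∧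
    ∀ θ ∈ E.Θ, (∀ θ' ∈ E.Θ, E.Wl Mo.qstar θ ≤ E.Wl Mo.qstar θ') → θ ≤ θm

/-- The conjectured demand `D*` as an element of `𝒟`. -/
def DstarDemand : Demand E where
  P := Mo.Pstar
  D := Mo.Dstar
  P_anti := Mo.Pstar_anti
  P_cont := Mo.Pstar_cont
  P_ge := Mo.Pstar_ge
  P0 := Mo.Pstar0
  D_inv := Mo.Dstar_inv
  D_high := Mo.Dstar_high
  D_low := Mo.Dstar_low
  D_lt := Mo.Dstar_lt

/-- Expected welfare `W((q,u); V*, F*)` of a quantity mechanism under the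
conjectured model. -/
def WStar (q u : ℝ → ℝ) : ℝ :=
  ∫ θ in E.θl..E.θu, (Mo.Vstar (q θ) - θ * q θ - u θ) * Mo.fstar θ

/-- Expected welfare `W̃((p,t); D*, F*)` of a price regulation under the
conjectured model. -/
def WtStar (p : ℝ → ℝ) (t : ℝ → Demand E → ℝ) : ℝ :=
  ∫ θ in E.θl..E.θu, E.wt p t θ Mo.DstarDemand * Mo.fstar θ

/-- A robustly optimal price regulation: in the price short list, and maximizing
expected welfare under the conjectured model over the price short list. -/
def RobustlyOptimalPR (p : ℝ → ℝ) (t : ℝ → Demand E → ℝ) : Prop :=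
  E.PriceShortList p t ∧
    ∀ (p' : ℝ → ℝ) (t' : ℝ → Demand E → ℝ), E.PriceShortList p' t' →
      Mo.WtStar p' t' ≤ Mo.WtStar p t

/-- A Baron–Myerson-with-price-cap regulation. -/
def IsBMPriceCap (p : ℝ → ℝ) (t : ℝ → Demand E → ℝ) : Prop :=
  E.IsAdmissiblePR p t ∧
  (∀ θ ∈ E.Θ, p θ = min (Mo.zstar θ) E.θu) ∧
  (∀ θ ∈ E.Θ, ∀ D : Demand E,
    E.rent p t θ D = E.rent p t E.θu D + ∫ y in θ..E.θu, D.D (p y)) ∧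
  (∀ D : Demand E, D ≠ E.DlDemand → D ≠ Mo.DstarDemand →
    0 ≤ E.rent p t E.θu D ∧
      E.rent p t E.θu D ≤ D.V (D.D E.θu) - E.θu * D.D E.θu - E.Gstar) ∧
  E.rent p t E.θu E.DlDemand = 0 ∧ E.rent p t E.θu Mo.DstarDemand = 0

end Model

namespace AuxProof

variable {E : Env}

lemma demand_mem (D : Demand E) (p : ℝ) : D.D p ∈ Icc (0:ℝ) E.qbar := by
  by_cases h1 : p < D.P E.qbar
  · rw [D.D_low p h1]; exact ⟨E.qbar_pos.le, le_rfl⟩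
  by_cases h2 : D.P 0 < p
  · rw [D.D_high p h2]; exact ⟨le_rfl, E.qbar_pos.le⟩
  · exact (D.D_inv p (not_lt.1 h1) (not_lt.1 h2)).1

lemma demand_anti (D : Demand E) {p1 p2 : ℝ} (h : p1 ≤ p2) : D.D p2 ≤ D.D p1 := by
  by_cases h1 : p1 < D.P E.qbar
  · rw [D.D_low p1 h1]; exact (demand_mem D p2).2
  by_cases h2 : D.P 0 < p2
  · rw [D.D_high p2 h2]; exact (demand_mem D p1).1
  push_neg at h1 h2
  have hm1 := D.D_inv p1 h1 (le_trans h h2)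
  have hm2 := D.D_inv p2 (le_trans h1 h) h2
  by_contra hlt
  push_neg at hlt
  have := D.P_anti hm1.1 hm2.1 hlt
  rw [hm1.2, hm2.2] at this
  linarith

lemma demand_strict (D : Demand E) {p1 p2 : ℝ} (hl : D.P E.qbar ≤ p1) (h : p1 < p2)
    (hu : p2 ≤ D.P 0) : D.D p2 < D.D p1 := by
  have hm1 := D.D_inv p1 hl (le_trans h.le hu)
  have hm2 := D.D_inv p2 (le_trans hl h.le) hu
  rcases (demand_anti D h.le).lt_or_eq with h' | h'
  · exact h'
  · exfalso
    rw [← hm1.2, ← hm2.2, h'] at h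
    exact lt_irrefl _ h

lemma demand_lb (D : Demand E) : D.P E.qbar ≤ E.θl := by
  by_contra h
  push_neg at h
  have h2 := D.D_lt
  rw [D.D_low E.θl h] at h2
  exact lt_irrefl _ h2

lemma ql_spec (E : Env) : E.ql ∈ Icc (0:ℝ) E.qbar ∧ E.Pl E.ql = E.θu := by
  have hlb : E.Pl E.qbar ≤ E.θl := demand_lb E.DlDemand
  exact E.Dl_inv E.θu (le_trans hlb E.θlu.le) E.Pl0.le

lemma ql_pos (E : Env) : 0 < E.ql := by
  rcases (ql_spec E).1.1.lt_or_eq with h | h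
  · exact h
  · exfalso
    have := (ql_spec E).2
    rw [← h] at this
    exact absurd this (ne_of_gt E.Pl0)

variable (Mo : Model E)

lemma zstar_ge {θ : ℝ} (hθ : θ ∈ E.Θ) : θ ≤ Mo.zstar θ := by
  have hF : 0 ≤ Mo.Fstar θ := by
    rw [Mo.Fstar_ac θ hθ]
    exact intervalIntegral.integral_nonneg hθ.1
      (fun y hy => (Mo.fstar_pos y ⟨hy.1, le_trans hy.2 hθ.2⟩).le)
  have hf : 0 < Mo.fstar θ := Mo.fstar_pos θ hθ
  have : 0 ≤ Mo.Fstar θ / Mo.fstar θ := div_nonneg hF hf.le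
  simp only [Model.zstar]
  linarith

lemma zstar_le_zstar {θ1 θ2 : ℝ} (h1 : θ1 ∈ E.Θ) (h2 : θ2 ∈ E.Θ) (h : θ1 ≤ θ2) :
    Mo.zstar θ1 ≤ Mo.zstar θ2 := by
  rcases h.lt_or_eq with h' | h'
  · exact (Mo.zstar_mono h1 h2 h').le
  · rw [h']

lemma qBM_anti {θ1 θ2 : ℝ} (h1 : θ1 ∈ E.Θ) (h2 : θ2 ∈ E.Θ) (h : θ1 ≤ θ2) :
    Mo.qBM θ2 ≤ Mo.qBM θ1 :=
  demand_anti Mo.DstarDemand (zstar_le_zstar Mo h1 h2 h)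

lemma qstar_anti : AntitoneOn Mo.qstar E.Θ := by
  intro θ1 h1 θ2 h2 h
  exact max_le_max (qBM_anti Mo h1 h2 h) le_rfl

lemma qstar_mem (θ : ℝ) : Mo.qstar θ ∈ Icc (0:ℝ) E.qbar :=
  ⟨le_trans (ql_spec E).1.1 (le_max_right _ _),
    max_le (demand_mem Mo.DstarDemand _).2 (ql_spec E).1.2⟩

/-- If a schedule is flat equal to `ql` on `[θ, θu]`, then `W̲(θ, q) = G*`. -/
lemma Wl_eq_Gstar (E : Env) {q : ℝ → ℝ} {θ : ℝ} (hθ : θ ∈ E.Θ)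
    (hflat : ∀ y ∈ Icc θ E.θu, q y = E.ql) : E.Wl q θ = E.Gstar := by
  simp only [Env.Wl, Env.Gstar]
  rw [hflat θ ⟨le_rfl, hθ.2⟩]
  rw [intervalIntegral.integral_congr (g := fun _ => E.ql)
    (by rw [Set.uIcc_of_le hθ.2]; exact fun y hy => hflat y hy)]
  rw [intervalIntegral.integral_const, smul_eq_mul]
  ring

/-- Key strict inequality: if `q` is antitone, `q(θu) < q(θ)` and `P̲(q(θu)) < θ < θu`,
then `W̲(θ, q) < W̲(θu, q)`. -/
lemma Wl_lt (E : Env) {q : ℝ → ℝ} {θ : ℝ}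
    (hq_anti : AntitoneOn q E.Θ)
    (hq_mem : ∀ y, q y ∈ Icc (0:ℝ) E.qbar)
    (hθ : θ ∈ E.Θ) (hθu : θ < E.θu)
    (hba : q E.θu < q θ)
    (hc : E.Pl (q E.θu) < θ) :
    E.Wl q θ < E.Wl q E.θu := by
  have hθuΘ : E.θu ∈ E.Θ := ⟨E.θlu.le, le_rfl⟩
  have haI : q E.θu ∈ Icc (0:ℝ) E.qbar := hq_mem _
  have hbI : q θ ∈ Icc (0:ℝ) E.qbar := hq_mem _
  have hPl_anti : AntitoneOn E.Pl (Icc 0 E.qbar) := E.Pl_anti.antitoneOn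
  have hi0a : IntervalIntegrable E.Pl MeasureTheory.volume 0 (q E.θu) :=
    (hPl_anti.mono (by rw [Set.uIcc_of_le haI.1]; exact Icc_subset_Icc le_rfl haI.2)).intervalIntegrable
  have hi0b : IntervalIntegrable E.Pl MeasureTheory.volume 0 (q θ) :=
    (hPl_anti.mono (by rw [Set.uIcc_of_le hbI.1]; exact Icc_subset_Icc le_rfl hbI.2)).intervalIntegrable
  have hiab : IntervalIntegrable E.Pl MeasureTheory.volume (q E.θu) (q θ) :=
    (hPl_anti.mono (by rw [Set.uIcc_of_le hba.le]; exact Icc_subset_Icc haI.1 hbI.2)).intervalIntegrable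
  have hV : E.Vl (q θ) - E.Vl (q E.θu) = ∫ s in (q E.θu)..(q θ), E.Pl s := by
    simp only [Env.Vl]
    exact intervalIntegral.integral_interval_sub_left hi0b hi0a
  have hVle : ∫ s in (q E.θu)..(q θ), E.Pl s ≤ (q θ - q E.θu) * E.Pl (q E.θu) := by
    have h1 : ∀ s ∈ Icc (q E.θu) (q θ), E.Pl s ≤ E.Pl (q E.θu) := by
      intro s hs
      rcases hs.1.lt_or_eq with h | h
      · exact (E.Pl_anti haI ⟨le_trans haI.1 hs.1, le_trans hs.2 hbI.2⟩ h).le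
      · rw [← h]
    have h2 := intervalIntegral.integral_mono_on hba.le hiab
      (intervalIntegrable_const (c := E.Pl (q E.θu))) h1
    rwa [intervalIntegral.integral_const, smul_eq_mul] at h2
  have hqi : IntervalIntegrable q MeasureTheory.volume θ E.θu := by
    refine (hq_anti.mono ?_).intervalIntegrable
    rw [Set.uIcc_of_le hθu.le]
    exact Icc_subset_Icc hθ.1 le_rfl
  have hIle : (E.θu - θ) * q E.θu ≤ ∫ y in θ..E.θu, q y := by
    have h1 : ∀ y ∈ Icc θ E.θu, q E.θu ≤ q y :=
      fun y hy => hq_anti ⟨le_trans hθ.1 hy.1, hy.2⟩ hθuΘ hy.2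
    have h2 := intervalIntegral.integral_mono_on hθu.le
      (intervalIntegrable_const (c := q E.θu)) hqi h1
    rwa [intervalIntegral.integral_const, smul_eq_mul] at h2
  have hpos : 0 < (θ - E.Pl (q E.θu)) * (q θ - q E.θu) :=
    mul_pos (sub_pos.mpr hc) (sub_pos.mpr hba)
  simp only [Env.Wl]
  rw [intervalIntegral.integral_same]
  nlinarith [hV, hVle, hIle, hpos]

end AuxProof

open AuxProof in
/-- Lemma (θ^m and θ*): if the Baron–Myerson-with-quantity-floor schedule violates a
robustness constraint, then `θ^m < θu` and `θ^m < θ*`. -/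
theorem thetaM_lt_thetaStar (E : Env) (Mo : Model E)
    (hviol : ∃ θ ∈ E.Θ, E.Wl Mo.qstar θ < E.Gstar)
    (θs θm : ℝ) (hθs : Mo.IsThetaStar θs) (hθm : Mo.IsThetaM θm) :
    θm < E.θu ∧ θm < θs := by
  obtain ⟨θ0, hθ0, hθ0v⟩ := hviol
  obtain ⟨hθmΘ, hθmmin, -⟩ := hθm
  have hθuΘ : E.θu ∈ E.Θ := ⟨E.θlu.le, le_rfl⟩
  have hmin_lt : E.Wl Mo.qstar θm < E.Gstar := lt_of_le_of_lt (hθmmin θ0 hθ0) hθ0v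
  rcases hθs with ⟨hcase, hθsΘ, hθseq⟩ | ⟨hcase, rfl⟩
  · -- Case (i): `q^BM(θu) < q_ℓ` and `q^BM(θ*) = q_ℓ`.
    have hflat : ∀ θ ∈ Icc θs E.θu, E.Wl Mo.qstar θ = E.Gstar := by
      intro θ hθ
      have hθΘ : θ ∈ E.Θ := ⟨le_trans hθsΘ.1 hθ.1, hθ.2⟩
      refine Wl_eq_Gstar E hθΘ (fun y hy => ?_)
      have hyΘ : y ∈ E.Θ := ⟨le_trans hθΘ.1 hy.1, hy.2⟩
      have : Mo.qBM y ≤ E.ql := by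
        rw [← hθseq]
        exact qBM_anti Mo hθsΘ hyΘ (le_trans hθ.1 hy.1)
      simp only [Model.qstar]
      exact max_eq_right this
    have hm_lt_s : θm < θs := by
      by_contra h
      push_neg at h
      rw [hflat θm ⟨h, hθmΘ.2⟩] at hmin_lt
      exact lt_irrefl _ hmin_lt
    exact ⟨lt_of_lt_of_le hm_lt_s hθsΘ.2, hm_lt_s⟩
  · -- Case (ii): `q_ℓ ≤ q^BM(θu)` and `θ* = θu`.
    suffices h : θm < E.θu from ⟨h, h⟩
    rcases hcase.lt_or_eq with hlt | heq
    · -- strict: `q_ℓ < q^BM(θu)`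
      have hqsu : Mo.qstar E.θu = Mo.qBM E.θu := max_eq_left hcase
      have haI : Mo.qBM E.θu ∈ Icc (0:ℝ) E.qbar := demand_mem Mo.DstarDemand _
      have hc : E.Pl (Mo.qBM E.θu) < E.θu := by
        have h := E.Pl_anti (ql_spec E).1 haI hlt
        rwa [(ql_spec E).2] at h
      set c := E.Pl (Mo.qBM E.θu) with hcdef
      set θ := max E.θl ((c + E.θu) / 2) with hθdef
      have hθu' : θ < E.θu := max_lt E.θlu (by linarith)
      have hθΘ : θ ∈ E.Θ := ⟨le_max_left _ _, hθu'.le⟩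
      have hcθ : c < θ := lt_of_lt_of_le (by linarith) (le_max_right _ _)
      -- q^BM is strictly larger at θ than at θu
      have hzθu_le : Mo.zstar E.θu ≤ Mo.Pstar 0 := by
        by_contra h
        push_neg at h
        have h0 : Mo.qBM E.θu = 0 := Mo.Dstar_high _ h
        have := (ql_spec E).1.1
        rw [h0] at hlt
        linarith [ql_pos E]
      have hzθ_ge : Mo.Pstar E.qbar ≤ Mo.zstar θ :=
        le_trans (le_trans (demand_lb Mo.DstarDemand) hθΘ.1) (zstar_ge Mo hθΘ)
      have hzlt : Mo.zstar θ < Mo.zstar E.θu := Mo.zstar_mono hθΘ hθuΘ hθu'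
      have hab : Mo.qBM E.θu < Mo.qBM θ :=
        demand_strict Mo.DstarDemand hzθ_ge hzlt hzθu_le
      have hba : Mo.qstar E.θu < Mo.qstar θ := by
        rw [hqsu]
        exact lt_of_lt_of_le hab (le_max_left _ _)
      have hkey : E.Wl Mo.qstar θ < E.Wl Mo.qstar E.θu := by
        refine Wl_lt E (qstar_anti Mo) (qstar_mem Mo) hθΘ hθu' hba ?_
        rw [hqsu]
        exact hcθ
      have hne : θm ≠ E.θu := by
        intro h
        have := hθmmin θ hθΘ
        rw [h] at this
        exact absurd this (not_le.mpr hkey)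
      exact lt_of_le_of_ne hθmΘ.2 hne
    · -- boundary: `q_ℓ = q^BM(θu)`, so `W̲(θu, q*) = G*`
      have hWu : E.Wl Mo.qstar E.θu = E.Gstar := by
        refine Wl_eq_Gstar E hθuΘ (fun y hy => ?_)
        have hy' : y = E.θu := le_antisymm hy.2 hy.1
        rw [hy']
        simp only [Model.qstar]
        rw [max_eq_left hcase, ← heq]
      have hne : θm ≠ E.θu := by
        intro h
        rw [h, hWu] at hmin_lt
        exact lt_irrefl _ hmin_lt
      exact lt_of_le_of_ne hθmΘ.2 hne
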